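/- Let K and L be compact Hausdorff spaces such that L contains a homeomorphic copy of the Cantor space 2^ω, and suppose there exists a continuous linear surjection T : C_p(K) → C_p(L), where C_p denotes the topology of pointwise convergence. Then K also contains a homeomorphic copy of 2^ω. -/

import Mathlib

open Set Function TopologicalSpace


def CpTopology (K : Type*) [TopologicalSpace K] : TopologicalSpace C(K, ℝ) :=
  TopologicalSpace.induced (fun g : C(K, ℝ) => (g : K → ℝ)) Pi.topologicalSpace

/-- evaluation functional -/
def evalAtL {X : Type*} [TopologicalSpace X] (x : X) : C(X, ℝ) →ₗ[ℝ] ℝ where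
  toFun g := g x
  map_add' g h := rfl
  map_smul' c g := rfl

lemma exists_bump {K : Type*} [TopologicalSpace K] [NormalSpace K] [T1Space K]
    {A : Set K} (hA : IsClosed A) {x : K} (hx : x ∉ A) :
    ∃ f : C(K, ℝ), f x = 1 ∧ ∀ y ∈ A, f y = 0 := by
  obtain ⟨f, h0, h1, -⟩ := exists_continuous_zero_one_of_isClosed hA isClosed_singleton
    (disjoint_singleton_right.mpr hx)
  exact ⟨f, h1 rfl, fun y hy => h0 hy⟩

lemma finite_support {K : Type*} [TopologicalSpace K]
    (φ : C(K, ℝ) →ₗ[ℝ] ℝ) (hφ : @Continuous _ _ (CpTopology K) _ φ) :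
    ∃ F : Finset K, ∀ g : C(K, ℝ), (∀ x ∈ F, g x = 0) → φ g = 0 := by
  have h0 : φ ⁻¹' (Set.Ioo (-1 : ℝ) 1) ∈ @nhds _ (CpTopology K) 0 := by
    have := @Continuous.tendsto _ _ (CpTopology K) _ φ hφ 0
    rw [map_zero] at this
    exact this (Ioo_mem_nhds (by norm_num) (by norm_num))
  rw [show CpTopology K = TopologicalSpace.induced (fun g : C(K, ℝ) => (g : K → ℝ))
      Pi.topologicalSpace from rfl, nhds_induced] at h0
  obtain ⟨S, hS, hSsub⟩ := h0
  rw [show ((0 : C(K, ℝ)) : K → ℝ) = (0 : K → ℝ) from rfl, nhds_pi, Filter.mem_pi] at hS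
  obtain ⟨I, hIfin, t, ht, htS⟩ := hS
  refine ⟨hIfin.toFinset, fun g hg => ?_⟩
  by_contra hne
  have hmem : ∀ c : ℝ, φ (c • g) ∈ Set.Ioo (-1 : ℝ) 1 := by
    intro c
    apply hSsub
    apply htS
    intro i hi
    have : g i = 0 := hg i (hIfin.mem_toFinset.mpr hi)
    show ((c • g : C(K, ℝ)) : K → ℝ) i ∈ t i
    have h0i : (0 : ℝ) ∈ t i := mem_of_mem_nhds (ht i)
    simpa [this] using h0i
  have := (hmem (2 / φ g)).2
  rw [map_smul, smul_eq_mul, div_mul_cancel₀ _ hne] at this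
  norm_num at this

lemma rep_exists {K : Type*} [TopologicalSpace K] [CompactSpace K] [T2Space K]
    (φ : C(K, ℝ) →ₗ[ℝ] ℝ) (hφ : @Continuous _ _ (CpTopology K) _ φ) :
    ∃ (F : Finset K) (a : K → ℝ), (∀ x ∈ F, a x ≠ 0) ∧
      ∀ g : C(K, ℝ), φ g = ∑ x ∈ F, a x * g x := by
  classical
  obtain ⟨F₀, hF₀⟩ := finite_support φ hφ
  -- bumps
  have hb : ∀ x ∈ F₀, ∃ f : C(K, ℝ), f x = 1 ∧ ∀ y ∈ (F₀ : Set K) \ {x}, f y = 0 := by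
    intro x hx
    exact exists_bump ((F₀.finite_toSet.diff).isClosed) (fun h => h.2 rfl)
  choose! bump hbump1 hbump0 using hb
  have hbumpval : ∀ x ∈ F₀, ∀ y ∈ F₀, bump y x = if y = x then 1 else 0 := by
    intro x hx y hy
    by_cases h : y = x
    · subst h; simp [hbump1 y hy]
    · simp only [if_neg h]
      exact hbump0 y hy x ⟨hx, fun hmem => h (hmem.symm)⟩
  have hsum_eval : ∀ (g : C(K, ℝ)), ∀ x ∈ F₀, ((∑ y ∈ F₀, g y • bump y : C(K, ℝ)) : K → ℝ) x = g x := by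
    intro g x hx
    rw [ContinuousMap.coe_sum, Finset.sum_apply]
    rw [Finset.sum_eq_single x]
    · simp [hbump1 x hx]
    · intro y hy hne
      simp [hbumpval x hx y hy, hne]
    · intro h; exact absurd hx h
  have key : ∀ g : C(K, ℝ), φ g = ∑ x ∈ F₀, φ (bump x) * g x := by
    intro g
    have hvan : φ (g - ∑ x ∈ F₀, g x • bump x) = 0 := by
      apply hF₀
      intro x hx
      simp only [ContinuousMap.sub_apply]
      rw [hsum_eval g x hx, sub_self]
    rw [show φ g = φ (∑ x ∈ F₀, g x • bump x) from sub_eq_zero.mp (by rw [← map_sub]; exact hvan), map_sum]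
    apply Finset.sum_congr rfl
    intro x hx
    rw [map_smul, smul_eq_mul, mul_comm]
  refine ⟨F₀.filter (fun x => φ (bump x) ≠ 0), fun x => φ (bump x), ?_, ?_⟩
  · intro x hx
    exact (Finset.mem_filter.mp hx).2
  · intro g
    rw [key g, Finset.sum_filter]
    apply Finset.sum_congr rfl
    intro x hx
    by_cases h : φ (bump x) = 0 <;> simp [h]


lemma secondCountable_of_compact_surj {X Y : Type*} [TopologicalSpace X] [TopologicalSpace Y]
    [CompactSpace X] [SecondCountableTopology X] [T2Space Y]
    {f : X → Y} (hf : Continuous f) (hsurj : Function.Surjective f) :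
    SecondCountableTopology Y := by
  classical
  set B : Set (Set X) := countableBasis X with hB
  set 𝒰 : Set (Set X) := Set.sUnion '' {t : Set (Set X) | t.Finite ∧ t ⊆ B} with h𝒰
  have h𝒰c : 𝒰.Countable :=
    (Set.countable_setOf_finite_subset (countable_countableBasis X)).image _
  have h𝒰open : ∀ U ∈ 𝒰, IsOpen U := by
    rintro U ⟨t, ⟨htf, htB⟩, rfl⟩
    exact isOpen_sUnion fun u hu => isOpen_of_mem_countableBasis (htB hu)
  set S : Set X → Set Y := fun U => (f '' Uᶜ)ᶜ with hSdef
  have hSopen : ∀ U ∈ 𝒰, IsOpen (S U) := by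
    intro U hU
    have : IsCompact (f '' Uᶜ) := (((h𝒰open U hU).isClosed_compl).isCompact).image hf
    exact this.isClosed.isOpen_compl
  apply TopologicalSpace.IsTopologicalBasis.secondCountableTopology
    (b := S '' 𝒰) ?_ (h𝒰c.image _)
  apply TopologicalSpace.isTopologicalBasis_of_isOpen_of_nhds
  · rintro V ⟨U, hU, rfl⟩; exact hSopen U hU
  · intro y O hy hO
    have hfiber : IsCompact (f ⁻¹' {y}) := (isClosed_singleton.preimage hf).isCompact
    have hcov : ∀ x ∈ f ⁻¹' {y}, ∃ b ∈ B, x ∈ b ∧ b ⊆ f ⁻¹' O := by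
      intro x hx
      have hxO : x ∈ f ⁻¹' O := by
        simp only [mem_preimage] at hx ⊢; rw [hx]; exact hy
      exact (isBasis_countableBasis X).exists_subset_of_mem_open hxO (hO.preimage hf)
    choose! b hbB hbx hbO using hcov
    obtain ⟨t, ht⟩ := hfiber.elim_finite_subcover (fun x : ↥(f ⁻¹' {y}) => b x)
      (fun x => isOpen_of_mem_countableBasis (hbB x x.2))
      (fun x hx => mem_iUnion.mpr ⟨⟨x, hx⟩, hbx x hx⟩)
    set U : Set X := ⋃ x ∈ t, b x with hU
    have hU𝒰 : U ∈ 𝒰 := by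
      refine ⟨(fun x : ↥(f ⁻¹' {y}) => b x) '' ↑t, ⟨(t.finite_toSet).image _, ?_⟩, ?_⟩
      · rintro u ⟨x, hx, rfl⟩; exact hbB x x.2
      · rw [Set.sUnion_image]; rfl
    refine ⟨S U, ⟨U, hU𝒰, rfl⟩, ?_, ?_⟩
    · show y ∈ (f '' Uᶜ)ᶜ
      simp only [mem_compl_iff]
      rintro ⟨x, hxU, hfx⟩
      exact hxU (ht (show x ∈ f ⁻¹' {y} from by simp [hfx]))
    · intro y' hy'
      obtain ⟨x', rfl⟩ := hsurj y'
      simp only [hSdef, mem_compl_iff] at hy'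
      have hx'U : x' ∈ U := by
        by_contra hmem
        exact hy' ⟨x', hmem, rfl⟩
      simp only [hU, mem_iUnion] at hx'U
      obtain ⟨x, hx, hx'b⟩ := hx'U
      exact hbO x x.2 hx'b

theorem stmt17 {K L : Type*}
    [TopologicalSpace K] [CompactSpace K] [T2Space K]
    [TopologicalSpace L] [CompactSpace L] [T2Space L]
    (hCantor : ∃ e : (ℕ → Bool) → L, Continuous e ∧ Function.Injective e)
    (T : C(K, ℝ) →ₗ[ℝ] C(L, ℝ))
    (hT : @Continuous _ _ (CpTopology K) (CpTopology L) T)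
    (hsurj : Function.Surjective T) :
    ∃ e : (ℕ → Bool) → K, Continuous e ∧ Function.Injective e := by
  classical
  -- the functionals `g ↦ T g y` are continuous w.r.t. the pointwise topology
  have hcoeL : @Continuous _ _ (CpTopology L) _ (fun h : C(L, ℝ) => (h : L → ℝ)) :=
    continuous_induced_dom
  have hφc : ∀ y : L, @Continuous _ _ (CpTopology K) _ (fun g : C(K, ℝ) => T g y) :=
    fun y => @Continuous.comp _ _ _ (CpTopology K) (CpTopology L) _ _ _
      (@Continuous.comp _ _ _ (CpTopology L) _ _ _ _ (continuous_apply y) hcoeL) hT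
  -- finite supports with nonzero coefficients
  have hrep' : ∀ y : L, ∃ (F : Finset K) (a : K → ℝ), (∀ x ∈ F, a x ≠ 0) ∧
      ∀ g : C(K, ℝ), T g y = ∑ x ∈ F, a x * g x := by
    intro y
    obtain ⟨F, a, h1, h2⟩ := rep_exists ((evalAtL y).comp T) (hφc y)
    exact ⟨F, a, h1, h2⟩
  choose F a haz hrep using hrep'
  -- the key lower semicontinuity lemma
  have lsc_key : ∀ (y : L) (x : K), x ∈ F y → ∀ U : Set K, IsOpen U → x ∈ U →
      ∃ V : Set L, IsOpen V ∧ y ∈ V ∧ ∀ y' ∈ V, ∃ x' ∈ F y', x' ∈ U := by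
    intro y x hx U hU hxU
    set A : Set K := Uᶜ ∪ ((F y : Set K) \ {x}) with hA
    have hAcl : IsClosed A := (hU.isClosed_compl).union (((F y).finite_toSet.diff).isClosed)
    have hxA : x ∉ A := by
      intro h
      rcases h with h | h
      · exact h hxU
      · exact h.2 rfl
    obtain ⟨f, hf1, hf0⟩ := exists_bump hAcl hxA
    have hval : T f y = a y x := by
      rw [hrep y f, Finset.sum_eq_single x]
      · rw [hf1, mul_one]
      · intro x' hx' hne
        rw [hf0 x' (Or.inr ⟨hx', hne⟩), mul_zero]
      · intro h; exact absurd hx h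
    refine ⟨{y' : L | T f y' ≠ 0}, ?_, ?_, ?_⟩
    · exact (isOpen_compl_singleton).preimage (T f).continuous
    · show T f y ≠ 0
      rw [hval]; exact haz y x hx
    · intro y' hy'
      by_contra hcon
      push_neg at hcon
      apply hy'
      rw [hrep y' f]
      apply Finset.sum_eq_zero
      intro x' hx'
      rw [hf0 x' (Or.inl (hcon x' hx')), mul_zero]
  -- every support is nonempty
  have hFne : ∀ y : L, (F y).Nonempty := by
    intro y
    obtain ⟨g₁, hg₁⟩ := hsurj 1
    rw [Finset.nonempty_iff_ne_empty]
    intro hemp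
    have := hrep y g₁
    rw [hemp, Finset.sum_empty, hg₁] at this
    simp at this
  -- separating finite sets by disjoint open sets
  have hsep : ∀ (G : Finset K), ∃ U : K → Set K, (∀ x ∈ G, IsOpen (U x) ∧ x ∈ U x) ∧
      ∀ x ∈ G, ∀ x' ∈ G, x ≠ x' → Disjoint (U x) (U x') := by
    intro G
    have hpair : ∀ x x' : K, ∃ uv : Set K × Set K, x ≠ x' →
        IsOpen uv.1 ∧ IsOpen uv.2 ∧ x ∈ uv.1 ∧ x' ∈ uv.2 ∧ Disjoint uv.1 uv.2 := by
      intro x x'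
      by_cases h : x = x'
      · exact ⟨(∅, ∅), fun hne => absurd h hne⟩
      · obtain ⟨u, v, hu, hv, hxu, hx'v, huv⟩ := t2_separation h
        exact ⟨(u, v), fun _ => ⟨hu, hv, hxu, hx'v, huv⟩⟩
    choose uv huv using hpair
    refine ⟨fun x => (⋂ x' ∈ G.erase x, (uv x x').1) ∩ (⋂ x' ∈ G.erase x, (uv x' x).2),
      fun x hx => ⟨?_, ?_, ?_⟩, ?_⟩
    · exact (isOpen_biInter_finset fun x' hx' =>
        (huv x x' (Finset.ne_of_mem_erase hx').symm).1).inter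
        (isOpen_biInter_finset fun x' hx' => (huv x' x (Finset.ne_of_mem_erase hx')).2.1)
    · exact Set.mem_iInter₂.mpr fun x' hx' => (huv x x' (Finset.ne_of_mem_erase hx').symm).2.2.1
    · exact Set.mem_iInter₂.mpr fun x' hx' => (huv x' x (Finset.ne_of_mem_erase hx')).2.2.2.1
    · intro x hx x' hx' hne
      refine ((huv x x' hne).2.2.2.2).mono ?_ ?_
      · exact (Set.inter_subset_left).trans
          (Set.iInter₂_subset x' (Finset.mem_erase.mpr ⟨hne.symm, hx'⟩))
      · exact (Set.inter_subset_right).trans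
          (Set.iInter₂_subset x (Finset.mem_erase.mpr ⟨hne, hx⟩))
  -- monotonicity nbhd: cardinality of supports is lower semicontinuous
  have hmono : ∀ y : L, ∃ V : Set L, IsOpen V ∧ y ∈ V ∧
      ∀ y' ∈ V, (F y).card ≤ (F y').card := by
    intro y
    obtain ⟨U, hU1, hU2⟩ := hsep (F y)
    have hVx : ∀ x : K, ∃ V : Set L, IsOpen V ∧ y ∈ V ∧
        (x ∈ F y → ∀ y' ∈ V, ∃ x' ∈ F y', x' ∈ U x) := by
      intro x
      by_cases hx : x ∈ F y
      · obtain ⟨V, h1, h2, h3⟩ := lsc_key y x hx (U x) (hU1 x hx).1 (hU1 x hx).2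
        exact ⟨V, h1, h2, fun _ => h3⟩
      · exact ⟨Set.univ, isOpen_univ, trivial, fun h => absurd h hx⟩
    choose Vx hVx1 hVx2 hVx3 using hVx
    refine ⟨⋂ x ∈ F y, Vx x, isOpen_biInter_finset (fun x _ => hVx1 x), 
      Set.mem_iInter₂.mpr (fun x _ => hVx2 x), ?_⟩
    intro y' hy'
    have hpick : ∀ x ∈ F y, ∃ x', x' ∈ F y' ∧ x' ∈ U x := by
      intro x hx
      obtain ⟨x', h1, h2⟩ := hVx3 x hx y' (by
        exact Set.mem_of_mem_of_subset hy' (Set.iInter₂_subset x hx))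
      exact ⟨x', h1, h2⟩
    set p : K → K := fun x => if h : ∃ x', x' ∈ F y' ∧ x' ∈ U x then h.choose else x with hp
    have hp1 : ∀ x ∈ F y, p x ∈ F y' ∧ p x ∈ U x := by
      intro x hx
      have h := hpick x hx
      simp only [hp, dif_pos h]
      exact h.choose_spec
    apply Finset.card_le_card_of_injOn p (fun x hx => (hp1 x hx).1)
    intro x1 hx1 x2 hx2 heq
    by_contra hne
    exact Set.disjoint_left.mp (hU2 x1 hx1 x2 hx2 hne) (hp1 x1 hx1).2 (heq ▸ (hp1 x2 hx2).2)
  -- openness of `{y | k ≤ |supp y|}`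
  have hσopen : ∀ k : ℕ, IsOpen {y : L | k ≤ (F y).card} := by
    intro k
    rw [isOpen_iff_forall_mem_open]
    intro y hy
    obtain ⟨V, h1, h2, h3⟩ := hmono y
    exact ⟨V, fun y' hy' => le_trans hy (h3 y' hy'), h1, h2⟩
  -- only finitely many functionals share a given support superset
  have hfib : ∀ G : Finset K, {y : L | F y ⊆ G}.Finite := by
    intro G
    by_contra hinf
    rw [← Set.Infinite] at hinf
    obtain ⟨t, htsub, htcard⟩ := hinf.exists_subset_card_eq (G.card + 1)
    -- the functionals `g ↦ T g y` for `y ∈ t` are linearly independent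
    have hli : LinearIndependent ℝ (fun y : ↥t => (evalAtL (y : L)).comp T) := by
      rw [linearIndependent_iff']
      intro s co hsum i hi
      have hyne : ((i : L)) ∉ ((s.erase i).image (fun j : ↥t => (j : L)) : Finset L) := by
        intro hmem
        obtain ⟨j, hj, hji⟩ := Finset.mem_image.mp hmem
        exact (Finset.ne_of_mem_erase hj) (Subtype.val_injective hji)
      obtain ⟨f, hf1, hf0⟩ := exists_bump
        (((s.erase i).image (fun j : ↥t => (j : L))).finite_toSet.isClosed) hyne
      obtain ⟨w, hw⟩ := hsurj f
      have happ := LinearMap.congr_fun hsum w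
      rw [LinearMap.sum_apply] at happ
      simp only [LinearMap.smul_apply, LinearMap.comp_apply, LinearMap.zero_apply] at happ
      have : ∀ j ∈ s, co j * T w (j : L) = if j = i then co i else 0 := by
        intro j hj
        by_cases h : j = i
        · subst h
          rw [if_pos rfl, show (T w) (j:L) = f (j:L) from by rw [hw], hf1, mul_one]
        · rw [if_neg h]
          rw [show (T w) (j:L) = f (j:L) from by rw [hw]]
          rw [hf0 _ (Finset.mem_coe.mpr (Finset.mem_image.mpr ⟨j, Finset.mem_erase.mpr ⟨h, hj⟩, rfl⟩)), mul_zero]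
      have happ2 : ∑ j ∈ s, co j * (T w) (j : L) = 0 := by
        simpa [evalAtL, smul_eq_mul] using happ
      rw [Finset.sum_congr rfl (fun j hj => this j hj),
        Finset.sum_ite_eq' s i (fun _ => co i), if_pos hi] at happ2
      exact happ2
    -- but they all lie in the span of `G.card` evaluation functionals
    set D : Finset (C(K, ℝ) →ₗ[ℝ] ℝ) := G.image (fun x => evalAtL x) with hD
    set W : Submodule ℝ (C(K, ℝ) →ₗ[ℝ] ℝ) := Submodule.span ℝ (D : Set _) with hW
    have hmemW : ∀ y : ↥t, (evalAtL (y : L)).comp T ∈ W := by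
      intro y
      have heq : (evalAtL (y : L)).comp T = ∑ x ∈ F (y : L), a (y : L) x • evalAtL x := by
        apply LinearMap.ext
        intro g
        rw [LinearMap.sum_apply]
        simp only [LinearMap.smul_apply, smul_eq_mul]
        exact hrep (y : L) g
      rw [heq]
      apply Submodule.sum_mem
      intro x hx
      apply Submodule.smul_mem
      apply Submodule.subset_span
      exact Finset.mem_coe.mpr (Finset.mem_image.mpr ⟨x, htsub y.2 hx, rfl⟩)
    haveI : FiniteDimensional ℝ W := FiniteDimensional.span_of_finite ℝ (D.finite_toSet)
    have hli' : LinearIndependent ℝ (fun y : ↥t => (⟨(evalAtL (y : L)).comp T, hmemW y⟩ : W)) :=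
      LinearIndependent.of_comp W.subtype hli
    have hcard := hli'.fintype_card_le_finrank
    rw [Fintype.card_coe] at hcard
    have hrank : Module.finrank ℝ W ≤ D.card := by
      simpa [hW, Set.finrank] using finrank_span_finset_le_card (R := ℝ) D
    have := le_trans hcard (le_trans hrank (Finset.card_image_le))
    omega
  -- Baire category on the Cantor set in `L`
  obtain ⟨e0, he0c, he0i⟩ := hCantor
  have hAcl : ∀ k : ℕ, IsClosed {σ : ℕ → Bool | (F (e0 σ)).card ≤ k} := by
    intro k
    rw [← isOpen_compl_iff]
    have : {σ : ℕ → Bool | (F (e0 σ)).card ≤ k}ᶜ = e0 ⁻¹' {y : L | k + 1 ≤ (F y).card} := by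
      ext σ
      simp only [Set.mem_compl_iff, Set.mem_setOf_eq, Set.mem_preimage]
      omega
    rw [this]
    exact (hσopen (k + 1)).preimage he0c
  obtain ⟨k₀, hk₀⟩ := nonempty_interior_of_iUnion_of_closed hAcl
    (by ext σ; simp only [Set.mem_iUnion, Set.mem_setOf_eq, Set.mem_univ, iff_true]
        exact ⟨(F (e0 σ)).card, le_refl _⟩)
  set O : Set (ℕ → Bool) := interior {σ : ℕ → Bool | (F (e0 σ)).card ≤ k₀} with hO
  have hObd : ∀ σ ∈ O, (F (e0 σ)).card ≤ k₀ := fun σ hσ =>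
    (interior_subset (s := {τ : ℕ → Bool | (F (e0 τ)).card ≤ k₀}) hσ : _)
  set Sv : Set ℕ := (fun σ => (F (e0 σ)).card) '' O with hSv
  have hSvne : Sv.Nonempty := hk₀.image _
  have hSvbd : BddAbove Sv := ⟨k₀, by rintro j ⟨σ, hσ, rfl⟩; exact hObd σ hσ⟩
  set m : ℕ := sSup Sv with hm
  obtain ⟨σ₁, hσ₁O, hσ₁m⟩ : ∃ σ₁ ∈ O, (F (e0 σ₁)).card = m := Nat.sSup_mem hSvne hSvbd
  set Wc : Set (ℕ → Bool) := O ∩ (e0 ⁻¹' {y : L | m ≤ (F y).card}) with hWc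
  have hWo : IsOpen Wc := isOpen_interior.inter ((hσopen m).preimage he0c)
  have hσ₁W : σ₁ ∈ Wc := ⟨hσ₁O, by rw [Set.mem_preimage, Set.mem_setOf_eq, hσ₁m]⟩
  have hWcard : ∀ σ ∈ Wc, (F (e0 σ)).card = m := by
    intro σ hσ
    exact le_antisymm (le_csSup hSvbd ⟨σ, hσ.1, rfl⟩) hσ.2
  -- cylinders inside open sets
  have hcyl : ∀ (Wo : Set (ℕ → Bool)), IsOpen Wo → ∀ σ₀ ∈ Wo,
      ∃ N : ℕ, {σ : ℕ → Bool | ∀ i < N, σ i = σ₀ i} ⊆ Wo := by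
    intro Wo hWoo σ₀ hσ₀
    have hmem : Wo ∈ nhds σ₀ := hWoo.mem_nhds hσ₀
    rw [nhds_pi, Filter.mem_pi] at hmem
    obtain ⟨I, hIf, tt, htt, hsub⟩ := hmem
    obtain ⟨N₀, hN₀⟩ := hIf.bddAbove
    refine ⟨N₀ + 1, fun σ hσ => hsub ?_⟩
    intro i hi
    have : σ i = σ₀ i := hσ i (Nat.lt_succ_of_le (hN₀ hi))
    rw [this]
    exact mem_of_mem_nhds (htt i)
  obtain ⟨N, hN⟩ := hcyl Wc hWo σ₁ hσ₁W
  set hmap : (ℕ → Bool) → (ℕ → Bool) := fun σ i => if i < N then σ₁ i else σ (i - N) with hhmap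
  have hmapc : Continuous hmap := by
    apply continuous_pi
    intro i
    by_cases h : i < N
    · simp only [hhmap, if_pos h]; exact continuous_const
    · simp only [hhmap, if_neg h]; exact continuous_apply _
  have hmapi : Injective hmap := by
    intro σ σ' heq
    funext j
    have := congrFun heq (N + j)
    simpa [hhmap, Nat.add_sub_cancel_left] using this
  have hmapW : ∀ σ, hmap σ ∈ Wc := fun σ => hN (fun i hi => if_pos hi)
  set c : (ℕ → Bool) → L := fun σ => e0 (hmap σ) with hc
  have hcc : Continuous c := he0c.comp hmapc
  have hci : Injective c := he0i.comp hmapi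
  have hmc : ∀ σ, (F (c σ)).card = m := fun σ => hWcard _ (hmapW σ)
  -- local continuous selections for the support map
  have hSEL : ∀ σ₀ : ℕ → Bool, ∃ (V : Set (ℕ → Bool)) (s : Fin m → (ℕ → Bool) → K),
      IsOpen V ∧ IsCompact V ∧ σ₀ ∈ V ∧ (∀ i, ContinuousOn (s i) V) ∧
      ∀ σ ∈ V, ∀ x ∈ F (c σ), ∃ i, s i σ = x := by
    intro σ₀
    have hcard : Fintype.card ↥(F (c σ₀)) = m := by rw [Fintype.card_coe]; exact hmc σ₀
    set eqv := Fintype.equivFinOfCardEq hcard with heqv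
    set xh : Fin m → K := fun i => ((eqv.symm i : ↥(F (c σ₀))) : K) with hxh
    have hxhmem : ∀ i, xh i ∈ F (c σ₀) := fun i => (eqv.symm i).2
    have hxhinj : Injective xh := fun i j hij =>
      eqv.symm.injective (Subtype.val_injective hij)
    obtain ⟨U', hU'1, hU'2⟩ := hsep (F (c σ₀))
    set U : Fin m → Set K := fun i => U' (xh i) with hU
    have hUo : ∀ i, IsOpen (U i) := fun i => (hU'1 _ (hxhmem i)).1
    have hUmem : ∀ i, xh i ∈ U i := fun i => (hU'1 _ (hxhmem i)).2
    have hUdisj : ∀ i j, i ≠ j → Disjoint (U i) (U j) := fun i j hij =>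
      hU'2 _ (hxhmem i) _ (hxhmem j) (fun h => hij (hxhinj h))
    have hVL : ∀ i : Fin m, ∃ V : Set L, IsOpen V ∧ c σ₀ ∈ V ∧
        ∀ y' ∈ V, ∃ x' ∈ F y', x' ∈ U i :=
      fun i => lsc_key (c σ₀) (xh i) (hxhmem i) (U i) (hUo i) (hUmem i)
    choose VL hVL1 hVL2 hVL3 using hVL
    set V₀ : Set (ℕ → Bool) := ⋂ i : Fin m, c ⁻¹' (VL i) with hV₀
    have hV₀o : IsOpen V₀ := isOpen_iInter_of_finite (fun i => (hVL1 i).preimage hcc)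
    have hσ₀V₀ : σ₀ ∈ V₀ := Set.mem_iInter.mpr (fun i => hVL2 i)
    have hkey : ∀ σ ∈ V₀, ∃ p : Fin m → K, Injective p ∧
        (∀ i, p i ∈ F (c σ) ∧ p i ∈ U i) ∧ ∀ x ∈ F (c σ), ∃ i, x = p i := by
      intro σ hσ
      have hpick : ∀ i : Fin m, ∃ x', x' ∈ F (c σ) ∧ x' ∈ U i := by
        intro i
        obtain ⟨x', h1, h2⟩ := hVL3 i (c σ) (Set.mem_iInter.mp hσ i)
        exact ⟨x', h1, h2⟩
      choose p hp1 hp2 using hpick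
      have hpinj : Injective p := by
        intro i j hij
        by_contra hne
        exact Set.disjoint_left.mp (hUdisj i j hne) (hp2 i) (hij ▸ hp2 j)
      refine ⟨p, hpinj, fun i => ⟨hp1 i, hp2 i⟩, ?_⟩
      have hq : Finset.image p Finset.univ = F (c σ) := by
        apply Finset.eq_of_subset_of_card_le
        · intro x hx; obtain ⟨i, _, rfl⟩ := Finset.mem_image.mp hx; exact hp1 i
        · rw [Finset.card_image_of_injective _ hpinj, Finset.card_univ, Fintype.card_fin, hmc σ]
      intro x hx
      rw [← hq] at hx
      obtain ⟨i, _, rfl⟩ := Finset.mem_image.mp hx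
      exact ⟨i, rfl⟩
    have huniq : ∀ σ ∈ V₀, ∀ i : Fin m, ∀ x y : K,
        x ∈ F (c σ) → x ∈ U i → y ∈ F (c σ) → y ∈ U i → x = y := by
      intro σ hσ i x y hx hxU hy hyU
      obtain ⟨p, hpinj, hp, hcov⟩ := hkey σ hσ
      obtain ⟨jx, rfl⟩ := hcov x hx
      obtain ⟨jy, rfl⟩ := hcov y hy
      have hjx : jx = i := by
        by_contra hne
        exact Set.disjoint_left.mp (hUdisj jx i hne) ((hp jx).2) hxU
      have hjy : jy = i := by
        by_contra hne
        exact Set.disjoint_left.mp (hUdisj jy i hne) ((hp jy).2) hyU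
      rw [hjx, hjy]
    set sfun : Fin m → (ℕ → Bool) → K := fun i σ =>
      if h : ∃ x, x ∈ F (c σ) ∧ x ∈ U i then h.choose else xh i with hsfun
    have hsmem : ∀ σ ∈ V₀, ∀ i, sfun i σ ∈ F (c σ) ∧ sfun i σ ∈ U i := by
      intro σ hσ i
      obtain ⟨p, hpinj, hp, hcov⟩ := hkey σ hσ
      have h : ∃ x, x ∈ F (c σ) ∧ x ∈ U i := ⟨p i, (hp i).1, (hp i).2⟩
      simp only [hsfun, dif_pos h]
      exact h.choose_spec
    have hscov2 : ∀ σ ∈ V₀, ∀ x ∈ F (c σ), ∃ i, sfun i σ = x := by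
      intro σ hσ x hx
      obtain ⟨p, hpinj, hp, hcov⟩ := hkey σ hσ
      obtain ⟨i, rfl⟩ := hcov x hx
      exact ⟨i, huniq σ hσ i _ _ (hsmem σ hσ i).1 (hsmem σ hσ i).2 (hp i).1 (hp i).2⟩
    have hscont : ∀ i, ContinuousOn (sfun i) V₀ := by
      intro i σ hσ
      apply ContinuousAt.continuousWithinAt
      rw [continuousAt_def]
      intro A hA
      rw [mem_nhds_iff] at hA
      obtain ⟨O, hOsub, hOopen, hmemO⟩ := hA
      obtain ⟨V₂, hV₂o, hV₂m, hV₂p⟩ := lsc_key (c σ) (sfun i σ) (hsmem σ hσ i).1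
        (U i ∩ O) ((hUo i).inter hOopen) ⟨(hsmem σ hσ i).2, hmemO⟩
      rw [mem_nhds_iff]
      refine ⟨V₀ ∩ c ⁻¹' V₂, ?_, hV₀o.inter (hV₂o.preimage hcc), hσ, hV₂m⟩
      rintro σ' ⟨hσ'V₀, hσ'V₂⟩
      obtain ⟨x', hx'F, hx'U, hx'O⟩ : ∃ x', x' ∈ F (c σ') ∧ x' ∈ U i ∧ x' ∈ O := by
        obtain ⟨x', h1, h2⟩ := hV₂p (c σ') hσ'V₂
        exact ⟨x', h1, h2.1, h2.2⟩
      have : sfun i σ' = x' :=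
        huniq σ' hσ'V₀ i _ _ (hsmem σ' hσ'V₀ i).1 (hsmem σ' hσ'V₀ i).2 hx'F hx'U
      exact hOsub (this ▸ hx'O)
    -- shrink to a compact (clopen) cylinder
    obtain ⟨N', hN'⟩ := hcyl V₀ hV₀o σ₀ hσ₀V₀
    set Z : Set (ℕ → Bool) := {σ : ℕ → Bool | ∀ i < N', σ i = σ₀ i} with hZ
    have hZeq : Z = ⋂ i ∈ Finset.range N', (fun σ : ℕ → Bool => σ i) ⁻¹' {σ₀ i} := by
      ext σ
      simp [hZ, Set.mem_iInter]
    have hZo : IsOpen Z := by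
      rw [hZeq]
      exact isOpen_biInter_finset fun i _ =>
        (isOpen_discrete _).preimage (continuous_apply i)
    have hZcl : IsClosed Z := by
      rw [hZeq]
      exact isClosed_biInter fun i _ =>
        (isClosed_discrete _).preimage (continuous_apply i)
    refine ⟨Z, sfun, hZo, hZcl.isCompact, fun i _ => rfl, fun i => (hscont i).mono hN', ?_⟩
    intro σ hσ x hx
    exact hscov2 σ (hN' hσ) x hx
  -- `2^ω` is uncountable
  have huncount : ¬ Countable (ℕ → Bool) := by
    intro hcnt
    have hinj : Function.Injective (fun (s : Set ℕ) (n : ℕ) => decide (n ∈ s)) := by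
      intro s t hst
      ext n
      have := congrFun hst n
      simpa [decide_eq_decide] using this
    haveI : Countable (Set ℕ) := hinj.countable
    obtain ⟨f, hf⟩ := exists_injective_nat (Set ℕ)
    exact Function.cantor_injective f hf
  -- the union of the supports over the Cantor set is uncountable
  set X₀ : Set K := {x : K | ∃ σ, x ∈ F (c σ)} with hX₀def
  have hX₀unc : ¬ X₀.Countable := by
    intro hcnt
    have h𝒢 : {G : Finset K | ↑G ⊆ X₀}.Countable := by
      have h1 := Set.countable_setOf_finite_subset hcnt
      have h2 : {G : Finset K | ↑G ⊆ X₀} ⊆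
          (fun G : Finset K => (G : Set K)) ⁻¹' {u | u.Finite ∧ u ⊆ X₀} := by
        intro G hG
        exact ⟨G.finite_toSet, hG⟩
      exact ((h1.preimage Finset.coe_injective).mono h2 : _)
    have hcnt2 : (Set.univ : Set (ℕ → Bool)).Countable := by
      have hsub : (Set.univ : Set (ℕ → Bool)) ⊆
          ⋃ G ∈ {G : Finset K | ↑G ⊆ X₀}, {σ | F (c σ) = G} := by
        intro σ _
        exact Set.mem_biUnion (fun x hx => ⟨σ, hx⟩) rfl
      refine Set.Countable.mono hsub ?_
      apply Set.Countable.biUnion h𝒢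
      intro G hG
      apply Set.Finite.countable
      apply Set.Finite.subset (Set.Finite.preimage (hci.injOn) (hfib G))
      intro σ hσ
      simp only [Set.mem_preimage, Set.mem_setOf_eq]
      exact le_of_eq hσ
    rw [Set.countable_univ_iff] at hcnt2
    exact huncount hcnt2
  -- cover the Cantor set by finitely many selection domains
  choose Vv sv hVo hVcpt hVmem hscont hscov using hSEL
  obtain ⟨tfin, htfin⟩ := isCompact_univ.elim_finite_subcover Vv hVo
    (fun σ _ => Set.mem_iUnion.mpr ⟨σ, hVmem σ⟩)
  have hbig : ∃ σs ∈ tfin, ∃ i : Fin m, ¬ (sv σs i '' Vv σs).Countable := by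
    by_contra hall
    push_neg at hall
    apply hX₀unc
    have hsub : X₀ ⊆ ⋃ σs ∈ tfin, ⋃ i : Fin m, sv σs i '' Vv σs := by
      rintro x ⟨σ, hx⟩
      obtain ⟨σs, hσs, hσV⟩ := Set.mem_iUnion₂.mp (htfin (Set.mem_univ σ))
      obtain ⟨i, hi⟩ := hscov σs σ hσV x hx
      exact Set.mem_biUnion hσs (Set.mem_iUnion.mpr ⟨i, ⟨σ, hσV, hi⟩⟩)
    exact (Set.Countable.biUnion (tfin.countable_toSet)
      (fun σs hσs => Set.countable_iUnion (fun i => hall σs hσs i))).mono hsub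
  obtain ⟨σs, hσst, i, hYunc⟩ := hbig
  -- the image is an uncountable compact metrizable subset of K
  set Y : Set K := sv σs i '' Vv σs with hYdef
  have hYcpt : IsCompact Y := (hVcpt σs).image_of_continuousOn (hscont σs i)
  haveI : CompactSpace ↥Y := isCompact_iff_compactSpace.mp hYcpt
  haveI : CompactSpace ↥(Vv σs) := isCompact_iff_compactSpace.mp (hVcpt σs)
  have hgc : Continuous (fun σ : ↥(Vv σs) =>
      (⟨sv σs i ↑σ, Set.mem_image_of_mem _ σ.2⟩ : ↥Y)) :=
    Continuous.subtype_mk ((hscont σs i).restrict) _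
  have hgsurj : Surjective (fun σ : ↥(Vv σs) =>
      (⟨sv σs i ↑σ, Set.mem_image_of_mem _ σ.2⟩ : ↥Y)) := by
    rintro ⟨y, ⟨σ, hσ, rfl⟩⟩
    exact ⟨⟨σ, hσ⟩, rfl⟩
  haveI : SecondCountableTopology ↥Y := secondCountable_of_compact_surj hgc hgsurj
  letI : MetricSpace ↥Y := TopologicalSpace.metrizableSpaceMetric ↥Y
  haveI : PolishSpace ↥Y := inferInstance
  obtain ⟨f, hfr, hfc, hfi⟩ := IsClosed.exists_nat_bool_injection_of_not_countable
    (isClosed_univ (X := ↥Y)) (by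
      intro h
      rw [Set.countable_univ_iff] at h
      exact hYunc (Set.countable_coe_iff.mpr h))
  exact ⟨Subtype.val ∘ f, continuous_subtype_val.comp hfc, Subtype.val_injective.comp hfi⟩
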